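/- Let (X_i)_{i=0}^n be a bounded martingale adapted to a filtration (F_i), with V = sum_{i=0}^{n-1} Var(X_{i+1}|F_i), v = ess sup V, and b = max_i ess sup (X_{i+1} - X_i | F_i). Then for all t ≥ 0, P(max_{0≤i≤n} X_i ≥ t) ≤ exp(-t^2 / (2v(1 + bt/(3v)))). -/

import Mathlib

open MeasureTheory Finset Nat

section Analysis

private lemma exp_tsum' (x : ℝ) : Real.exp x = ∑' n : ℕ, x ^ n / n ! := by
  rw [Real.exp_eq_exp_ℝ, NormedSpace.exp_eq_tsum_div]

private lemma summable_g' (x : ℝ) : Summable fun n : ℕ => x ^ (n+2) / (n+2)! :=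
  (summable_nat_add_iff 2).2 (Real.summable_pow_div_factorial x)

private lemma g_tsum' (x : ℝ) : Real.exp x - 1 - x = ∑' n : ℕ, x ^ (n+2) / (n+2)! := by
  have h := Real.summable_pow_div_factorial x
  have h1 : Summable fun n : ℕ => x ^ (n+1) / (n+1)! :=
    (summable_nat_add_iff 1).2 h
  rw [exp_tsum', Summable.tsum_eq_zero_add h, Summable.tsum_eq_zero_add h1]
  simp [Nat.factorial]

private lemma g_ge' (z : ℝ) (hz : 0 ≤ z) : z ^ 2 / 2 ≤ Real.exp z - 1 - z := by
  rw [g_tsum']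
  have hh : z ^ (0+2) / ((0+2)! : ℝ) = z ^ 2 / 2 := by norm_num
  rw [← hh]
  refine Summable.le_tsum (summable_g' z) 0 fun j _ => ?_
  positivity

private lemma g_mono' {y z : ℝ} (hy : 0 ≤ y) (hyz : y ≤ z) :
    z ^ 2 * (Real.exp y - 1 - y) ≤ y ^ 2 * (Real.exp z - 1 - z) := by
  rw [g_tsum', g_tsum', ← tsum_mul_left, ← tsum_mul_left]
  refine Summable.tsum_le_tsum (fun n => ?_) ((summable_g' y).mul_left _) ((summable_g' z).mul_left _)
  rw [mul_div_assoc', mul_div_assoc']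
  refine div_le_div_of_nonneg_right ?_ (by positivity)
  calc z ^ 2 * y ^ (n+2) = (y ^ 2 * z ^ 2) * y ^ n := by ring
    _ ≤ (y ^ 2 * z ^ 2) * z ^ n :=
        mul_le_mul_of_nonneg_left (pow_le_pow_left₀ hy hyz n) (by positivity)
    _ = y ^ 2 * z ^ (n+2) := by ring

private lemma exp_le_quadratic' {y : ℝ} (hy : y ≤ 0) : Real.exp y - 1 - y ≤ y ^ 2 / 2 := by
  set f : ℝ → ℝ := fun y => 1 + y + y ^ 2 / 2 - Real.exp y with hf
  have hderiv : ∀ x : ℝ, HasDerivAt f (1 + x - Real.exp x) x := by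
    intro x
    have h1 : HasDerivAt (fun y : ℝ => 1 + y) 1 x := (hasDerivAt_id x).const_add 1
    have h2 : HasDerivAt (fun y : ℝ => y ^ 2 / 2) x x := by
      have := (hasDerivAt_pow 2 x).div_const 2
      simpa using this
    exact ((h1.add h2).sub (Real.hasDerivAt_exp x)).congr_deriv (by ring)
  have hanti : Antitone f := by
    refine antitone_of_deriv_nonpos (fun x => (hderiv x).differentiableAt) ?_
    intro x
    rw [(hderiv x).deriv]
    have := Real.add_one_le_exp x
    linarith
  have h0 : f 0 = 0 := by simp [hf]
  have := hanti hy
  rw [h0] at this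
  simp only [hf] at this
  linarith

private lemma g_le_bernstein' {x : ℝ} (hx : 0 ≤ x) (hx3 : x < 3) :
    Real.exp x - 1 - x ≤ x ^ 2 / 2 * (3 / (3 - x)) := by
  have hfact : ∀ n : ℕ, (2 * 3 ^ n : ℝ) ≤ (n + 2)! := by
    intro n
    induction n with
    | zero => norm_num
    | succ k ih =>
      have h3 : (k + 1 + 2)! = (k + 3) * (k + 2)! := by
        rw [show k + 1 + 2 = (k + 2) + 1 from rfl, Nat.factorial_succ]
      rw [h3]
      push_cast
      have he : (2:ℝ) * 3 ^ (k+1) = 3 * (2 * 3 ^ k) := by ring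
      rw [he]
      have hk2 : (3:ℝ) ≤ (k:ℝ) + 3 := by linarith [Nat.cast_nonneg (α := ℝ) k]
      calc (3:ℝ) * (2 * 3 ^ k) ≤ 3 * (k+2)! :=
            mul_le_mul_of_nonneg_left ih (by norm_num)
        _ ≤ ((k:ℝ)+3) * (k+2)! := mul_le_mul_of_nonneg_right hk2 (by positivity)
  have hgeo : Summable fun n : ℕ => x ^ 2 / 2 * (x/3) ^ n :=
    (summable_geometric_of_lt_one (by positivity)
      (by rw [div_lt_one (by norm_num : (0:ℝ) < 3)]; exact hx3)).mul_left _
  rw [g_tsum']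
  have hsum : ∑' n : ℕ, x ^ 2 / 2 * (x/3) ^ n = x ^ 2 / 2 * (3 / (3 - x)) := by
    rw [tsum_mul_left, tsum_geometric_of_lt_one (by positivity) (by
      rw [div_lt_one (by norm_num : (0:ℝ) < 3)]; exact hx3)]
    congr 1
    have h13 : (1 - x/3) = (3-x)/3 := by ring
    rw [h13, inv_div]
  rw [← hsum]
  refine Summable.tsum_le_tsum (fun n => ?_) (summable_g' x) hgeo
  have hr : x ^ 2 / 2 * (x/3) ^ n = x ^ 2 * x ^ n / (2 * 3 ^ n) := by
    rw [div_pow]; ring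
  rw [hr, div_le_div_iff₀ (by positivity) (by positivity)]
  calc x ^ (n+2) * (2 * 3 ^ n) ≤ x ^ (n+2) * (n+2)! :=
        mul_le_mul_of_nonneg_left (hfact n) (by positivity)
    _ = x ^ 2 * x ^ n * (n+2)! := by ring

private lemma key_ineq' {h b x : ℝ} (hh : 0 ≤ h) (hb : 0 < b) (hx : x ≤ b) :
    Real.exp (h * x) ≤ 1 + h * x + (Real.exp (h * b) - 1 - h * b) / b ^ 2 * x ^ 2 := by
  rcases eq_or_lt_of_le hh with rfl | hh
  · simp
  have hz : 0 < h * b := mul_pos hh hb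
  have hgz : (h * b) ^ 2 / 2 ≤ Real.exp (h * b) - 1 - h * b := g_ge' _ hz.le
  have hyz : h * x ≤ h * b := mul_le_mul_of_nonneg_left hx hh.le
  have hb2 : (0:ℝ) < b ^ 2 := by positivity
  suffices hs : Real.exp (h * x) - 1 - h * x ≤ (Real.exp (h * b) - 1 - h * b) / b ^ 2 * x ^ 2 by
    linarith
  rcases le_or_gt (h * x) 0 with hy | hy
  · have h1 := exp_le_quadratic' hy
    have h2 : (h * x) ^ 2 / 2 ≤ (Real.exp (h * b) - 1 - h * b) / b ^ 2 * x ^ 2 := by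
      rw [div_mul_eq_mul_div, le_div_iff₀ hb2]
      calc (h * x) ^ 2 / 2 * b ^ 2 = (h * b) ^ 2 / 2 * x ^ 2 := by ring
        _ ≤ (Real.exp (h * b) - 1 - h * b) * x ^ 2 :=
            mul_le_mul_of_nonneg_right hgz (sq_nonneg x)
    linarith
  · have hm := g_mono' hy.le hyz
    rw [div_mul_eq_mul_div, le_div_iff₀ hb2]
    calc (Real.exp (h * x) - 1 - h * x) * b ^ 2
        = (h * b) ^ 2 * (Real.exp (h * x) - 1 - h * x) / h ^ 2 := by
          field_simp
      _ ≤ (h * x) ^ 2 * (Real.exp (h * b) - 1 - h * b) / h ^ 2 :=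
          div_le_div_of_nonneg_right hm (by positivity)
      _ = (Real.exp (h * b) - 1 - h * b) * x ^ 2 := by
          field_simp

end Analysis

section Maximal

/-- Maximal inequality for nonnegative supermartingales. -/
private lemma supermax' {Ω : Type*} {m0 : MeasurableSpace Ω} {μ : Measure Ω} [IsFiniteMeasure μ]
    {𝒢 : Filtration ℕ m0} {f : ℕ → Ω → ℝ} (hsup : Supermartingale f 𝒢 μ)
    (hnonneg : ∀ i ω, 0 ≤ f i ω) (ε : ℝ) (n : ℕ) :
    ε * (μ {ω | ∃ i ≤ n, ε ≤ f i ω}).toReal ≤ ∫ ω, f 0 ω ∂μ := by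
  set A := {ω | ∃ i ≤ n, ε ≤ f i ω} with hA
  set τ : Ω → WithTop ℕ := fun ω => (hittingBtwn f (Set.Ici ε) 0 n ω : ℕ) with hτdef
  have hτ : IsStoppingTime 𝒢 τ :=
    hittingBtwn_isStoppingTime hsup.stronglyAdapted.adapted measurableSet_Ici
  have hAmeas : MeasurableSet A := by
    have : A = ⋃ i ∈ Set.Iic n, {ω | ε ≤ f i ω} := by
      ext ω; simp [hA]
    rw [this]
    refine MeasurableSet.biUnion (Set.to_countable _) fun i _ => ?_
    exact measurableSet_le measurable_const
      ((hsup.stronglyMeasurable i).measurable.le (𝒢.le i))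
  have hstop_ge : ∀ ω ∈ A, ε ≤ stoppedValue f τ ω := by
    intro ω hω
    obtain ⟨i, hin, hi⟩ := hω
    refine stoppedValue_hittingBtwn_mem ?_
    exact ⟨i, by simpa using hin, hi⟩
  have hneg : stoppedValue (-f) τ = -(stoppedValue f τ) := by
    funext ω; simp [stoppedValue]
  have hint : Integrable (stoppedValue f τ) μ := by
    have := (hsup.neg.integrable_stoppedValue hτ (fun ω => WithTop.coe_le_coe.2 (hittingBtwn_le ω))).neg
    rw [hneg] at this
    simpa using this
  have h1 : ε * (μ A).toReal ≤ ∫ ω in A, stoppedValue f τ ω ∂μ :=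
    by have := setIntegral_ge_of_const_le hAmeas (measure_ne_top μ A) hstop_ge hint.integrableOn
       rwa [smul_eq_mul, measureReal_def, mul_comm] at this
  have h2 : ∫ ω in A, stoppedValue f τ ω ∂μ ≤ ∫ ω, stoppedValue f τ ω ∂μ :=
    setIntegral_le_integral hint (Filter.Eventually.of_forall fun ω => hnonneg _ ω)
  have h3 : ∫ ω, stoppedValue f τ ω ∂μ ≤ ∫ ω, f 0 ω ∂μ := by
    have := hsup.neg.expected_stoppedValue_mono (isStoppingTime_const 𝒢 0) hτ
      (fun ω => WithTop.coe_le_coe.2 (Nat.zero_le _)) (fun ω => WithTop.coe_le_coe.2 (hittingBtwn_le ω))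
    rw [hneg, stoppedValue_const] at this
    simp only [Pi.neg_apply, integral_neg] at this
    linarith
  linarith

end Maximal

section MainBound

private lemma main_bound' {Ω : Type*} {m0 : MeasurableSpace Ω} (μ : Measure Ω)
    [IsProbabilityMeasure μ] (ℱ : Filtration ℕ m0) (n : ℕ) (Z : ℕ → Ω → ℝ)
    (hmart : Martingale Z ℱ μ) {K : ℝ} (hK0 : 0 ≤ K) (hK : ∀ i ω, |Z i ω| ≤ K)
    (hZ0 : ∀ ω, Z 0 ω = 0) (v b h : ℝ) (hv : 0 < v) (hb : 0 < b) (hh : 0 ≤ h)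
    (hV : ∀ᵐ ω ∂μ, ∑ i ∈ Finset.range n,
        (μ[fun ω' => (Z (i + 1) ω' - Z i ω') ^ 2 | ℱ i]) ω ≤ v)
    (hjump : ∀ i, ∀ᵐ ω ∂μ, Z (i + 1) ω - Z i ω ≤ b)
    (t : ℝ) (ht : 0 ≤ t) :
    (μ {ω | ∃ i ≤ n, t ≤ Z i ω}).toReal
      ≤ Real.exp ((Real.exp (h * b) - 1 - h * b) / b ^ 2 * v - h * t) := by
  classical
  set c : ℝ := (Real.exp (h * b) - 1 - h * b) / b ^ 2 with hcdef
  set W : ℕ → Ω → ℝ := fun i => μ[fun ω' => (Z (i + 1) ω' - Z i ω') ^ 2 | ℱ i] with hWdef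
  set V : ℕ → Ω → ℝ := fun k ω => ∑ i ∈ Finset.range k, W i ω with hVdef
  set M : ℕ → Ω → ℝ := fun k ω => Real.exp (h * Z k ω - c * V k ω) with hMdef
  have hc0 : 0 ≤ c := by
    have := g_ge' (h * b) (by positivity)
    have h2 : (0:ℝ) ≤ (h*b)^2/2 := by positivity
    exact div_nonneg (by linarith) (by positivity)
  have hZm : ∀ k, StronglyMeasurable (Z k) :=
    fun k => (hmart.stronglyMeasurable k).mono (ℱ.le k)
  have hWm : ∀ k, StronglyMeasurable[ℱ k] (W k) := fun k => stronglyMeasurable_condExp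
  have hWnn : ∀ k, 0 ≤ᵐ[μ] W k := fun k =>
    condExp_nonneg (Filter.Eventually.of_forall fun ω => sq_nonneg _)
  have hWnn' : ∀ᵐ ω ∂μ, ∀ k, 0 ≤ W k ω := by
    rw [MeasureTheory.ae_all_iff]; exact fun k => hWnn k
  have hVm : ∀ k j, k ≤ j + 1 → StronglyMeasurable[ℱ j] (V k) := by
    intro k j hkj
    refine Finset.stronglyMeasurable_fun_sum (M := ℝ) (Finset.range k) fun i hi => ?_
    exact (hWm i).mono (ℱ.mono (Nat.lt_succ_iff.1 (lt_of_lt_of_le (mem_range.1 hi) hkj)))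
  have hMsm : ∀ k, StronglyMeasurable[ℱ k] (M k) := fun k =>
    Real.continuous_exp.comp_stronglyMeasurable
      (((hmart.stronglyAdapted k).const_mul h).sub ((hVm k k (Nat.le_succ k)).const_mul c))
  have hMbd : ∀ k, ∀ᵐ ω ∂μ, ‖M k ω‖ ≤ Real.exp (h * K) := by
    intro k
    filter_upwards [hWnn'] with ω hω
    have hVnn : 0 ≤ V k ω := Finset.sum_nonneg fun i _ => hω i
    rw [Real.norm_eq_abs, abs_of_pos (Real.exp_pos _), Real.exp_le_exp]
    have h1 : h * Z k ω ≤ h * K :=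
      mul_le_mul_of_nonneg_left (le_of_abs_le (hK k ω)) hh
    have h2 : 0 ≤ c * V k ω := mul_nonneg hc0 hVnn
    linarith
  have hMint : ∀ k, Integrable (M k) μ := fun k =>
    Integrable.mono' (integrable_const (Real.exp (h * K)))
      ((hMsm k).mono (ℱ.le k)).aestronglyMeasurable (hMbd k)
  -- the one-step supermartingale inequality
  have hstep : ∀ k, μ[M (k + 1)|ℱ k] ≤ᵐ[μ] M k := by
    intro k
    have hYm : StronglyMeasurable (fun ω => Z (k+1) ω - Z k ω) := (hZm (k+1)).sub (hZm k)
    have hYbd : ∀ ω, |Z (k+1) ω - Z k ω| ≤ 2 * K := by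
      intro ω
      have h1 := abs_le.1 (hK (k+1) ω)
      have h2 := abs_le.1 (hK k ω)
      rw [abs_le]; constructor <;> linarith [h1.1, h1.2, h2.1, h2.2]
    have hexpYm : StronglyMeasurable (fun ω => Real.exp (h * (Z (k+1) ω - Z k ω))) :=
      Real.continuous_exp.comp_stronglyMeasurable (hYm.const_mul h)
    have hexpYint : Integrable (fun ω => Real.exp (h * (Z (k+1) ω - Z k ω))) μ := by
      refine Integrable.mono' (integrable_const (Real.exp (h * (2*K))))
        hexpYm.aestronglyMeasurable (Filter.Eventually.of_forall fun ω => ?_)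
      rw [Real.norm_eq_abs, abs_of_pos (Real.exp_pos _), Real.exp_le_exp]
      exact mul_le_mul_of_nonneg_left (le_of_abs_le (hYbd ω)) hh
    have hY2m : StronglyMeasurable (fun ω => (Z (k+1) ω - Z k ω) ^ 2) := hYm.pow 2
    have hY2int : Integrable (fun ω => (Z (k+1) ω - Z k ω) ^ 2) μ := by
      refine Integrable.mono' (integrable_const ((2*K) ^ 2))
        hY2m.aestronglyMeasurable (Filter.Eventually.of_forall fun ω => ?_)
      rw [Real.norm_eq_abs, abs_of_nonneg (sq_nonneg _)]
      exact pow_le_pow_left₀ (abs_nonneg _) (hYbd ω) 2 |>.trans_eq' (by rw [sq_abs])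
    have hYint : Integrable (fun ω => Z (k+1) ω - Z k ω) μ :=
      (hmart.integrable (k+1)).sub (hmart.integrable k)
    -- conditional expectation of the increment is zero
    have hcondY : (μ[fun ω => Z (k+1) ω - Z k ω|ℱ k]) =ᵐ[μ] 0 := by
      have h1 : (μ[fun ω => Z (k+1) ω - Z k ω|ℱ k]) =ᵐ[μ]
          μ[Z (k+1)|ℱ k] - μ[Z k|ℱ k] :=
        condExp_sub (hmart.integrable (k+1)) (hmart.integrable k) _
      have h2 := hmart.condExp_ae_eq (Nat.le_succ k)
      have h3 := hmart.condExp_ae_eq (le_refl k)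
      filter_upwards [h1, h2, h3] with ω e1 e2 e3
      simp only [Pi.sub_apply, Pi.zero_apply] at *
      rw [e1, e2, e3]; ring
    -- conditional bound on the mgf of the increment
    have hEb : (μ[fun ω => Real.exp (h * (Z (k+1) ω - Z k ω))|ℱ k]) ≤ᵐ[μ]
        fun ω => 1 + c * W k ω := by
      have hptwise : ∀ᵐ ω ∂μ, Real.exp (h * (Z (k+1) ω - Z k ω)) ≤
          1 + h * (Z (k+1) ω - Z k ω) + c * (Z (k+1) ω - Z k ω) ^ 2 := by
        filter_upwards [hjump k] with ω hω
        exact key_ineq' hh hb hω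
      have hFint : Integrable (fun ω => 1 + h * (Z (k+1) ω - Z k ω)
          + c * (Z (k+1) ω - Z k ω) ^ 2) μ := by
        refine Integrable.add (Integrable.add (integrable_const 1) ?_) ?_
        · exact hYint.const_mul h
        · exact hY2int.const_mul c
      have hmono := condExp_mono (m := ℱ k) hexpYint hFint hptwise
      -- decompose the conditional expectation of the affine-quadratic bound
      have hFeq : (fun ω => 1 + h * (Z (k+1) ω - Z k ω) + c * (Z (k+1) ω - Z k ω) ^ 2)
          = ((fun _ : Ω => (1:ℝ)) + h • fun ω => Z (k+1) ω - Z k ω)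
            + c • fun ω => (Z (k+1) ω - Z k ω) ^ 2 := by
        funext ω
        simp only [Pi.add_apply, Pi.smul_apply, smul_eq_mul]
      have hd1 : (μ[(fun ω => 1 + h * (Z (k+1) ω - Z k ω)
            + c * (Z (k+1) ω - Z k ω) ^ 2)|ℱ k]) =ᵐ[μ]
          μ[((fun _ : Ω => (1:ℝ)) + h • fun ω => Z (k+1) ω - Z k ω)|ℱ k]
            + μ[(c • fun ω => (Z (k+1) ω - Z k ω) ^ 2)|ℱ k] := by
        rw [hFeq]
        exact condExp_add ((integrable_const 1).add (hYint.smul h)) (hY2int.smul c) _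
      have hd2 : (μ[((fun _ : Ω => (1:ℝ)) + h • fun ω => Z (k+1) ω - Z k ω)|ℱ k]) =ᵐ[μ]
          μ[(fun _ : Ω => (1:ℝ))|ℱ k] + μ[(h • fun ω => Z (k+1) ω - Z k ω)|ℱ k] :=
        condExp_add (integrable_const 1) (hYint.smul h) _
      have hd3 : (μ[(fun _ : Ω => (1:ℝ))|ℱ k]) = fun _ => (1:ℝ) := condExp_const (ℱ.le k) 1
      have hd4 : (μ[(h • fun ω => Z (k+1) ω - Z k ω)|ℱ k]) =ᵐ[μ]
          h • μ[fun ω => Z (k+1) ω - Z k ω|ℱ k] := condExp_smul h _ _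
      have hd5 : (μ[(c • fun ω => (Z (k+1) ω - Z k ω) ^ 2)|ℱ k]) =ᵐ[μ]
          c • μ[fun ω => (Z (k+1) ω - Z k ω) ^ 2|ℱ k] := condExp_smul c _ _
      filter_upwards [hmono, hd1, hd2, hd4, hd5, hcondY] with ω e0 e1 e2 e4 e5 eY
      simp only [Pi.add_apply, Pi.smul_apply, smul_eq_mul, Pi.zero_apply] at *
      rw [e1, e2, e4, e5, hd3, eY] at e0
      simpa using e0
    -- pull-out property
    set G : Ω → ℝ := fun ω => Real.exp (h * Z k ω - c * V (k+1) ω) with hGdef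
    have hGsm : StronglyMeasurable[ℱ k] G :=
      Real.continuous_exp.comp_stronglyMeasurable
        (((hmart.stronglyAdapted k).const_mul h).sub ((hVm (k+1) k le_rfl).const_mul c))
    have hM1 : M (k+1) = G * fun ω => Real.exp (h * (Z (k+1) ω - Z k ω)) := by
      funext ω
      simp only [hMdef, hGdef, Pi.mul_apply, ← Real.exp_add]
      congr 1; ring
    have hpull : (μ[M (k+1)|ℱ k]) =ᵐ[μ]
        G * μ[fun ω => Real.exp (h * (Z (k+1) ω - Z k ω))|ℱ k] := by
      rw [hM1]
      exact condExp_mul_of_stronglyMeasurable_left hGsm (hM1 ▸ hMint (k+1)) hexpYint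
    filter_upwards [hpull, hEb] with ω e1 e2
    rw [e1]
    simp only [Pi.mul_apply]
    have hG0 : 0 ≤ G ω := (Real.exp_pos _).le
    calc G ω * (μ[fun ω => Real.exp (h * (Z (k+1) ω - Z k ω))|ℱ k]) ω
        ≤ G ω * (1 + c * W k ω) := mul_le_mul_of_nonneg_left e2 hG0
      _ ≤ G ω * Real.exp (c * W k ω) := by
          refine mul_le_mul_of_nonneg_left ?_ hG0
          linarith [Real.add_one_le_exp (c * W k ω)]
      _ = M k ω := by
          rw [hGdef, hMdef]
          simp only [← Real.exp_add]
          congr 1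
          have : V (k+1) ω = V k ω + W k ω := Finset.sum_range_succ _ _
          rw [this]; ring
  have hsupM : Supermartingale M ℱ μ := supermartingale_nat hMsm hMint hstep
  -- apply the maximal inequality
  have hM0 : ∀ ω, M 0 ω = 1 := by
    intro ω
    simp [hMdef, hVdef, hZ0 ω]
  have hint0 : ∫ ω, M 0 ω ∂μ = 1 := by
    simp only [hM0]
    simp
  have hmax := supermax' hsupM (fun i ω => (Real.exp_pos _).le)
    (Real.exp (h * t - c * v)) n
  rw [hint0] at hmax
  have hsub : μ {ω | ∃ i ≤ n, t ≤ Z i ω}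
      ≤ μ {ω | ∃ i ≤ n, Real.exp (h * t - c * v) ≤ M i ω} := by
    refine measure_mono_ae ?_
    filter_upwards [hV, hWnn'] with ω hVω hWω
    intro hmem
    obtain ⟨i, hin, hti⟩ := hmem
    refine ⟨i, hin, ?_⟩
    have hVi : V i ω ≤ v := by
      refine le_trans ?_ hVω
      exact Finset.sum_le_sum_of_subset_of_nonneg (Finset.range_subset_range.2 hin)
        fun j _ _ => hWω j
    rw [hMdef, Real.exp_le_exp]
    have h1 : h * t ≤ h * Z i ω := mul_le_mul_of_nonneg_left hti hh
    have h2 : c * V i ω ≤ c * v := mul_le_mul_of_nonneg_left hVi hc0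
    linarith
  have htr : (μ {ω | ∃ i ≤ n, t ≤ Z i ω}).toReal
      ≤ (μ {ω | ∃ i ≤ n, Real.exp (h * t - c * v) ≤ M i ω}).toReal :=
    ENNReal.toReal_mono (measure_ne_top μ _) hsub
  have hε : (0:ℝ) < Real.exp (h * t - c * v) := Real.exp_pos _
  have hfin : (μ {ω | ∃ i ≤ n, Real.exp (h * t - c * v) ≤ M i ω}).toReal
      ≤ Real.exp (c * v - h * t) := by
    have hx : (μ {ω | ∃ i ≤ n, Real.exp (h * t - c * v) ≤ M i ω}).toReal
        ≤ 1 / Real.exp (h * t - c * v) := (le_div_iff₀' hε).2 hmax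
    have he : 1 / Real.exp (h * t - c * v) = Real.exp (c * v - h * t) := by
      rw [one_div, ← Real.exp_neg, neg_sub]
    linarith [he ▸ hx]
  linarith

end MainBound

section Final

private lemma final_arith' {v b t h : ℝ} (hv : 0 < v) (hb : 0 < b) (ht : 0 ≤ t)
    (hhdef : h = t / (v + b * t / 3)) :
    (Real.exp (h * b) - 1 - h * b) / b ^ 2 * v - h * t
      ≤ -t ^ 2 / (2 * v * (1 + b * t / (3 * v))) := by
  have hD : 0 < v + b * t / 3 := by positivity
  have hh : 0 ≤ h := by rw [hhdef]; positivity
  have hhb : 0 ≤ h * b := by positivity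
  have hb3 : h * b < 3 := by
    rw [hhdef, div_mul_eq_mul_div, div_lt_iff₀ hD]
    nlinarith
  have gb := g_le_bernstein' hhb hb3
  have h3v : 3 - h * b = 3 * v / (v + b * t / 3) := by
    rw [hhdef]
    field_simp
    ring
  have hfrac : 3 / (3 - h * b) = (v + b * t / 3) / v := by
    rw [h3v]
    rw [div_div_eq_mul_div]
    field_simp
  have h1 : Real.exp (h * b) - 1 - h * b ≤ h ^ 2 * (v + b * t / 3) / (2 * v) * b ^ 2 := by
    rw [hfrac] at gb
    refine gb.trans (le_of_eq ?_)
    field_simp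
  have hc : (Real.exp (h * b) - 1 - h * b) / b ^ 2 ≤ h ^ 2 * (v + b * t / 3) / (2 * v) :=
    (div_le_iff₀ (by positivity)).2 h1
  have hcv : (Real.exp (h * b) - 1 - h * b) / b ^ 2 * v ≤ t ^ 2 / (2 * (v + b * t / 3)) := by
    have h2 : h ^ 2 * (v + b * t / 3) / (2 * v) * v = t ^ 2 / (2 * (v + b * t / 3)) := by
      rw [hhdef]; field_simp
    calc (Real.exp (h * b) - 1 - h * b) / b ^ 2 * v
        ≤ h ^ 2 * (v + b * t / 3) / (2 * v) * v := mul_le_mul_of_nonneg_right hc hv.le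
      _ = t ^ 2 / (2 * (v + b * t / 3)) := h2
  have hht : h * t = t ^ 2 / (v + b * t / 3) := by
    rw [hhdef]; field_simp
  have h2D : 2 * v * (1 + b * t / (3 * v)) = 2 * (v + b * t / 3) := by
    field_simp
  have hRHS : -t ^ 2 / (2 * v * (1 + b * t / (3 * v))) = -(t ^ 2 / (2 * (v + b * t / 3))) := by
    rw [h2D, neg_div]
  rw [hRHS]
  have hd2 : t ^ 2 / (2 * (v + b * t / 3)) - t ^ 2 / (v + b * t / 3)
      = -(t ^ 2 / (2 * (v + b * t / 3))) := by
    field_simp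
    ring
  linarith

end Final

/-- McDiarmid's martingale inequality (Theorem 3.15 of McDiarmid 1998),
strengthened to the running maximum via Doob's inequality: if `(X_i)_{i=0}^n`
is a bounded martingale with `X_0 = 0`, whose sum of predictable quadratic
variations is essentially bounded by `v` and whose one-step increments are
essentially bounded by `b`, then for all `t ≥ 0`,
`P(max_{0 ≤ i ≤ n} X_i ≥ t) ≤ exp(-t²/(2v(1 + bt/(3v))))`. -/
theorem stmt7 {Ω : Type*} {m0 : MeasurableSpace Ω} (μ : Measure Ω)
    [IsProbabilityMeasure μ] (ℱ : Filtration ℕ m0) (n : ℕ) (X : ℕ → Ω → ℝ)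
    (hmart : Martingale X ℱ μ) (hbdd : ∃ K : ℝ, ∀ i ω, |X i ω| ≤ K)
    (hX0 : ∀ ω, X 0 ω = 0) (v b : ℝ) (hv : 0 < v) (hb : 0 < b)
    (hV : ∀ᵐ ω ∂μ, ∑ i ∈ Finset.range n,
        (μ[fun ω' => (X (i + 1) ω' - X i ω') ^ 2 | ℱ i]) ω ≤ v)
    (hjump : ∀ i < n, ∀ᵐ ω ∂μ, X (i + 1) ω - X i ω ≤ b)
    (t : ℝ) (ht : 0 ≤ t) :
    (μ {ω | ∃ i ≤ n, t ≤ X i ω}).toReal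
      ≤ Real.exp (-t ^ 2 / (2 * v * (1 + b * t / (3 * v)))) := by
  obtain ⟨K, hK⟩ := hbdd
  set Z : ℕ → Ω → ℝ := fun k => X (min k n) with hZdef
  have hZK : ∀ i ω, |Z i ω| ≤ |K| := fun i ω => (hK _ ω).trans (le_abs_self K)
  have hZmart : Martingale Z ℱ μ := by
    constructor
    · intro k
      exact (hmart.stronglyMeasurable _).mono (ℱ.mono (min_le_left k n))
    · intro i j hij
      rcases le_or_gt i n with hin | hin
      · have h1 : min i n = i := min_eq_left hin
        simp only [hZdef, h1]
        exact hmart.condExp_ae_eq (le_min hij hin)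
      · have h1 : min i n = n := min_eq_right hin.le
        have h2 : min j n = n := min_eq_right (hin.le.trans hij)
        simp only [hZdef, h1, h2]
        exact Filter.EventuallyEq.of_eq (condExp_of_stronglyMeasurable (ℱ.le i)
          ((hmart.stronglyMeasurable n).mono (ℱ.mono hin.le)) (hmart.integrable n))
  have hZ0 : ∀ ω, Z 0 ω = 0 := fun ω => by simp [hZdef, hX0]
  have hWeq : ∀ i < n, (fun ω' => (Z (i+1) ω' - Z i ω') ^ 2)
      = fun ω' => (X (i+1) ω' - X i ω') ^ 2 := by
    intro i hi
    funext ω'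
    simp [hZdef, min_eq_left (Nat.succ_le_of_lt hi), min_eq_left hi.le]
  have hVZ : ∀ᵐ ω ∂μ, ∑ i ∈ Finset.range n,
      (μ[fun ω' => (Z (i + 1) ω' - Z i ω') ^ 2 | ℱ i]) ω ≤ v := by
    filter_upwards [hV] with ω hω
    refine le_trans (le_of_eq (Finset.sum_congr rfl fun i hi => ?_)) hω
    rw [hWeq i (mem_range.1 hi)]
  have hjumpZ : ∀ i, ∀ᵐ ω ∂μ, Z (i + 1) ω - Z i ω ≤ b := by
    intro i
    rcases lt_or_ge i n with hi | hi
    · filter_upwards [hjump i hi] with ω hω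
      simpa [hZdef, min_eq_left (Nat.succ_le_of_lt hi), min_eq_left hi.le] using hω
    · refine Filter.Eventually.of_forall fun ω => ?_
      simp only [hZdef, min_eq_right hi, min_eq_right (hi.trans (Nat.le_succ i))]
      simp [hb.le]
  have hsets : {ω | ∃ i ≤ n, t ≤ X i ω} = {ω | ∃ i ≤ n, t ≤ Z i ω} := by
    ext ω
    constructor <;> rintro ⟨i, hi, hti⟩ <;>
      exact ⟨i, hi, by simpa [hZdef, min_eq_left hi] using hti⟩
  have hD : 0 < v + b * t / 3 := by positivity
  set h : ℝ := t / (v + b * t / 3) with hhdef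
  have hh : 0 ≤ h := by rw [hhdef]; positivity
  have hmain := main_bound' μ ℱ n Z hZmart (abs_nonneg K) hZK hZ0 v b h hv hb hh hVZ hjumpZ t ht
  rw [hsets]
  refine hmain.trans ?_
  exact Real.exp_le_exp.2 (final_arith' hv hb ht hhdef)
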